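/- Let R be a root system spanning X with Weyl group W, α ∈ R, and X_α = ker α∨ (the root hyperplane in X). Every facet F of the chamber decomposition of X that spans X_α is contained in exactly one chamber C_α of the arrangement on X_α induced by the subsystem R ∩ X_α-hyperplanes; moreover the number of W_α-orbits on the set of such facets equals the number of facets contained in any single chamber C_α, where W_α is the Weyl group of the induced root system on X_α. -/

import Mathlib

noncomputable section

open scoped RealInnerProductSpace

variable {V : Type*} [NormedAddCommGroup V] [InnerProductSpace ℝ V] [FiniteDimensional ℝ V]

/-- A reduced (crystallographic) root system spanning `V`. -/
structure IsRootSystem (R : Set V) : Prop where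
  finite : R.Finite
  ne_zero : ∀ α ∈ R, α ≠ (0 : V)
  spans : Submodule.span ℝ R = ⊤
  reduced : ∀ α ∈ R, ∀ t : ℝ, t • α ∈ R → t = 1 ∨ t = -1
  reflect_mem : ∀ α ∈ R, ∀ β ∈ R, β - (2 * ⟪α, β⟫ / ⟪α, α⟫) • α ∈ R
  integral : ∀ α ∈ R, ∀ β ∈ R, ∃ n : ℤ, 2 * ⟪α, β⟫ = (n : ℝ) * ⟪α, α⟫

/-- Reflection in the hyperplane orthogonal to `α`. -/
def reflAt (α : V) : V ≃ₗᵢ[ℝ] V := Submodule.reflection ((ℝ ∙ α)ᗮ)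

/-- The Weyl group of `R`, generated by the reflections in the roots. -/
def weylGroup (R : Set V) : Subgroup (V ≃ₗᵢ[ℝ] V) :=
  Subgroup.closure {g | ∃ α ∈ R, g = reflAt α}

/-- Regular points: points on no root hyperplane. -/
def regularSet (R : Set V) : Set V := {x | ∀ α ∈ R, ⟪α, x⟫ ≠ 0}

/-- Weyl chambers: connected components of the set of regular points. -/
def chambers (R : Set V) : Set (Set V) :=
  {C | ∃ x ∈ regularSet R, C = connectedComponentIn (regularSet R) x}

/-- Points of the root hyperplane of `α` lying on no other root hyperplane. -/
def facetSet (R : Set V) (α : V) : Set V :=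
  {x | ⟪α, x⟫ = 0 ∧ ∀ β ∈ R, ⟪β, x⟫ = 0 → ∃ t : ℝ, β = t • α}

/-- Facets: codimension-one faces of Weyl chambers, i.e. connected components of a root
hyperplane with all the other root hyperplanes removed. -/
def facets (R : Set V) : Set (Set V) :=
  {F | ∃ α ∈ R, ∃ x ∈ facetSet R α, F = connectedComponentIn (facetSet R α) x}
/-- The chambers of the hyperplane `X_α` cut out by the roots orthogonal to `α`. -/
def hypChambers (R : Set V) (α : V) : Set (Set V) :=
  {C | ∃ x ∈ {y : V | ⟪α, y⟫ = 0 ∧ ∀ β ∈ R, ⟪α, β⟫ = 0 → ⟪β, y⟫ ≠ 0},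
    C = connectedComponentIn {y : V | ⟪α, y⟫ = 0 ∧ ∀ β ∈ R, ⟪α, β⟫ = 0 → ⟪β, y⟫ ≠ 0} x}

/-- The facets spanning the root hyperplane `X_α`. -/
def hypFacets (R : Set V) (α : V) : Set (Set V) :=
  {F | ∃ x ∈ facetSet R α, F = connectedComponentIn (facetSet R α) x}


set_option linter.unusedSectionVars false
set_option maxHeartbeats 1000000
attribute [local instance 10] Classical.propDecidable

lemma reflAt_apply (β x : V) : reflAt β x = x - (2 * ⟪β, x⟫ / ⟪β, β⟫) • β := by
  have h := Submodule.starProjection_add_starProjection_orthogonal (K := ℝ ∙ β) x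
  have hproj : (((ℝ ∙ β).starProjection x : V)) = (⟪β, x⟫ / ((‖β‖ : ℝ) ^ 2)) • β := by
    rw [Submodule.starProjection_singleton]; norm_num
  have h2 : ((((ℝ ∙ β)ᗮ).starProjection x : V)) = x - (⟪β, x⟫ / ((‖β‖ : ℝ) ^ 2)) • β := by
    rw [← hproj]; linear_combination (norm := module) h
  rw [reflAt, Submodule.reflection_apply, h2, real_inner_self_eq_norm_sq β]
  match eq_or_ne β 0 with
  | .inl h0 =>
    subst h0; simp only [norm_zero, smul_zero]
    rw [two_smul]; abel
  | .inr h0 =>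
    have hn : (‖β‖:ℝ)^2 ≠ 0 := pow_ne_zero 2 (norm_ne_zero_iff.mpr h0)
    rw [two_smul]
    rw [div_eq_mul_inv, div_eq_mul_inv, mul_assoc]
    module

lemma inner_w (w : V ≃ₗᵢ[ℝ] V) (x y : V) : ⟪w x, w y⟫ = ⟪x, y⟫ :=
  w.inner_map_map x y

lemma reflAt_self {β : V} (h : β ≠ 0) : reflAt β β = -β := by
  have hb : ⟪β, β⟫ ≠ 0 := by
    rw [real_inner_self_eq_norm_sq]; exact pow_ne_zero 2 (norm_ne_zero_iff.mpr h)
  rw [reflAt_apply, mul_div_assoc, div_self hb, mul_one, two_smul]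
  abel

lemma reflAt_orth {β x : V} (h : ⟪β, x⟫ = 0) : reflAt β x = x := by
  rw [reflAt_apply, h]; simp

lemma reflAt_conj (w : V ≃ₗᵢ[ℝ] V) (β : V) : reflAt (w β) = w * reflAt β * w⁻¹ := by
  ext x
  have hx : x = w (w⁻¹ x) := (w.apply_symm_apply x).symm
  simp only [LinearIsometryEquiv.coe_mul, Function.comp_apply]
  rw [reflAt_apply, reflAt_apply]
  conv_lhs => rw [hx]
  rw [inner_w, inner_w]
  simp only [map_sub, map_smul, LinearIsometryEquiv.apply_symm_apply]

lemma reflAt_smul {t : ℝ} (ht : t ≠ 0) (β : V) : reflAt (t • β) = reflAt β := by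
  unfold reflAt
  congr 2
  exact Submodule.span_singleton_smul_eq (IsUnit.mk0 t ht) β

lemma reflAt_neg (β : V) : reflAt (-β) = reflAt β := by
  rw [show (-β : V) = (-1 : ℝ) • β by module, reflAt_smul (by norm_num)]

lemma reflAt_mul_self (β : V) : reflAt β * reflAt β = 1 := by
  ext x
  simp only [LinearIsometryEquiv.coe_mul, Function.comp_apply, LinearIsometryEquiv.coe_one, id_eq]
  exact Submodule.reflection_involutive _ x

lemma reflAt_inv (β : V) : (reflAt β)⁻¹ = reflAt β := by
  rw [eq_comm, eq_inv_iff_mul_eq_one, reflAt_mul_self]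

/-- Nonnegative combinations of a finite set of vectors. -/
def InCone (D : Finset V) (x : V) : Prop :=
  ∃ c : V → ℝ, (∀ v ∈ D, 0 ≤ c v) ∧ x = ∑ v ∈ D, c v • v

lemma inCone_of_mem {D : Finset V} {x : V} (hx : x ∈ D) : InCone D x := by
  refine ⟨fun v => if v = x then 1 else 0, fun v _ => by dsimp only; split <;> norm_num, ?_⟩
  rw [Finset.sum_eq_single_of_mem x hx (fun b _ hbx => by simp [hbx])]
  simp

lemma inCone_sum {D : Finset V} (c : V → ℝ) (hc : ∀ v ∈ D, 0 ≤ c v) :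
    InCone D (∑ v ∈ D, c v • v) := ⟨c, hc, rfl⟩

lemma inCone_add {D : Finset V} {x y : V} (hx : InCone D x) (hy : InCone D y) :
    InCone D (x + y) := by
  obtain ⟨c, hc, rfl⟩ := hx; obtain ⟨d, hd, rfl⟩ := hy
  exact ⟨fun v => c v + d v, fun v hv => add_nonneg (hc v hv) (hd v hv), by
    rw [← Finset.sum_add_distrib]; exact Finset.sum_congr rfl fun v _ => (add_smul _ _ _).symm⟩

lemma inCone_smul {D : Finset V} {x : V} {t : ℝ} (ht : 0 ≤ t) (hx : InCone D x) :
    InCone D (t • x) := by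
  obtain ⟨c, hc, rfl⟩ := hx
  exact ⟨fun v => t * c v, fun v hv => mul_nonneg ht (hc v hv), by
    rw [Finset.smul_sum]; exact Finset.sum_congr rfl fun v _ => (mul_smul _ _ _).symm⟩

lemma inCone_div {D : Finset V} {x : V} {t : ℝ} (ht : 0 < t) (hx : InCone D (t • x)) :
    InCone D x := by
  have := inCone_smul (le_of_lt (inv_pos.mpr ht)) hx
  rwa [inv_smul_smul₀ (ne_of_gt ht)] at this

lemma inCone_mono {D D' : Finset V} (h : D ⊆ D') {x : V} (hx : InCone D x) : InCone D' x := by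
  obtain ⟨c, hc, rfl⟩ := hx
  refine ⟨fun v => if v ∈ D then c v else 0, fun v _ => by dsimp only; split <;> simp [hc, *], ?_⟩
  rw [← Finset.sum_subset h (fun v _ hv => by simp [hv])]
  exact Finset.sum_congr rfl fun v hv => by simp [hv]

lemma inCone_inner_nonneg {D : Finset V} {x z : V} (hx : InCone D x)
    (hz : ∀ v ∈ D, 0 ≤ ⟪v, z⟫) : 0 ≤ ⟪x, z⟫ := by
  obtain ⟨c, hc, rfl⟩ := hx
  rw [sum_inner]
  refine Finset.sum_nonneg fun v hv => ?_
  rw [real_inner_smul_left]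
  exact mul_nonneg (hc v hv) (hz v hv)

/-- Substituting a cone expression for `δ` into a cone expression. -/
lemma inCone_erase {D : Finset V} {x δ : V} (hx : InCone D x)
    (hδ : InCone (D.erase δ) δ) : InCone (D.erase δ) x := by
  by_cases hmem : δ ∈ D
  · obtain ⟨c, hc, rfl⟩ := hx
    have hsplit : ∑ v ∈ D, c v • v = c δ • δ + ∑ v ∈ D.erase δ, c v • v :=
      (Finset.add_sum_erase D (fun v => c v • v) hmem).symm
    rw [hsplit]
    exact inCone_add (inCone_smul (hc δ hmem) hδ)
      (inCone_sum c (fun v hv => hc v (Finset.mem_of_mem_erase hv)))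
  · rwa [Finset.erase_eq_of_notMem hmem]

lemma prod_reflAt_inv (l : List V) :
    ((l.map reflAt).prod)⁻¹ = (l.reverse.map reflAt).prod := by
  induction l with
  | nil => simp
  | cons a t ih =>
    rw [List.map_cons, List.prod_cons, mul_inv_rev, ih, List.reverse_cons, List.map_append,
      List.prod_append, List.map_singleton, List.prod_singleton, reflAt_inv]

lemma list_prod_mem_closure {S : Set V} (l : List V) (hl : ∀ v ∈ l, v ∈ S) :
    (l.map reflAt).prod ∈ Subgroup.closure {g : V ≃ₗᵢ[ℝ] V | ∃ β ∈ S, g = reflAt β} := by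
  refine Subgroup.list_prod_mem _ fun g hg => ?_
  obtain ⟨v, hv, rfl⟩ := List.mem_map.mp hg
  exact Subgroup.subset_closure ⟨v, hl v hv, rfl⟩

lemma inner_self_pos' {x : V} (h : x ≠ 0) : 0 < ⟪x, x⟫ := by
  rw [real_inner_self_eq_norm_sq]
  exact pow_pos (norm_pos_iff.mpr h) 2

lemma reflAt_reflAt (β x : V) : reflAt β (reflAt β x) = x := Submodule.reflection_involutive _ x

lemma image_connectedComponentIn' (w : V ≃ₗᵢ[ℝ] V) {s : Set V} (hs : ∀ y ∈ s, w y ∈ s)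
    (hs' : ∀ y ∈ s, w⁻¹ y ∈ s) {x : V} (hx : x ∈ s) :
    ⇑w '' connectedComponentIn s x = connectedComponentIn s (w x) := by
  have hseq : ⇑w '' s = s := by
    apply subset_antisymm
    · rintro y ⟨u, hu, rfl⟩; exact hs u hu
    · intro y hy
      refine ⟨w⁻¹ y, hs' y hy, ?_⟩
      simp [LinearIsometryEquiv.coe_inv]
  have h := Homeomorph.image_connectedComponentIn
    (w.toHomeomorph : V ≃ₜ V) (s := s) (x := x) hx
  have hcoe : ⇑(w.toHomeomorph : V ≃ₜ V) = ⇑w := rfl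
  rw [hcoe] at h
  rw [h, hseq]

/-- The sign-class set used for chamber comparisons. -/
def hset (α : V) (S : Set V) : Set V := {y | ⟪α, y⟫ = 0 ∧ ∀ β ∈ S, ⟪β, y⟫ ≠ 0}

lemma convex_combo_pos {a b p q : ℝ} (ha : 0 ≤ a) (hb : 0 ≤ b) (hab : a + b = 1)
    (hp : 0 < p) (hq : 0 < q) : 0 < a * p + b * q := by
  rcases eq_or_lt_of_le ha with h | h
  · have hb1 : b = 1 := by linarith
    rw [← h, hb1]; simpa using hq
  · have h1 : 0 < a * p := mul_pos h hp
    have h2 : 0 ≤ b * q := mul_nonneg hb (le_of_lt hq)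
    linarith

lemma mem_component_of_samesign (α : V) (S : Set V) {x y : V}
    (hx : x ∈ hset α S) (hy : y ∈ hset α S)
    (hsign : ∀ β ∈ S, (0 < ⟪β, x⟫ ↔ 0 < ⟪β, y⟫)) :
    y ∈ connectedComponentIn (hset α S) x := by
  set K : Set V := {u | ⟪α, u⟫ = 0 ∧
    ∀ β ∈ S, (0 < ⟪β, x⟫ → 0 < ⟪β, u⟫) ∧ (⟪β, x⟫ < 0 → ⟪β, u⟫ < 0)} with hK
  have hconv : Convex ℝ K := by
    rintro u hu v hv a b ha hb hab
    refine ⟨?_, fun β hβ => ⟨fun hpos => ?_, fun hneg => ?_⟩⟩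
    · rw [inner_add_right, real_inner_smul_right, real_inner_smul_right, hu.1, hv.1]
      ring
    · rw [inner_add_right, real_inner_smul_right, real_inner_smul_right]
      exact convex_combo_pos ha hb hab ((hu.2 β hβ).1 hpos) ((hv.2 β hβ).1 hpos)
    · rw [inner_add_right, real_inner_smul_right, real_inner_smul_right]
      have := convex_combo_pos ha hb hab (neg_pos.mpr ((hu.2 β hβ).2 hneg))
        (neg_pos.mpr ((hv.2 β hβ).2 hneg))
      linarith
  have hxK : x ∈ K := ⟨hx.1, fun β hβ => ⟨id, id⟩⟩
  have hyK : y ∈ K := by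
    refine ⟨hy.1, fun β hβ => ⟨fun h => (hsign β hβ).mp h, fun h => ?_⟩⟩
    rcases lt_or_gt_of_ne (hy.2 β hβ) with h' | h'
    · exact h'
    · exact absurd ((hsign β hβ).mpr h') (by linarith)
  have hKsub : K ⊆ hset α S := by
    rintro u ⟨h1, h2⟩
    refine ⟨h1, fun β hβ => ?_⟩
    rcases lt_or_gt_of_ne (hx.2 β hβ) with h' | h'
    · exact ne_of_lt ((h2 β hβ).2 h')
    · exact ne_of_gt ((h2 β hβ).1 h')
  exact hconv.isPreconnected.subset_connectedComponentIn hxK hKsub hyK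

lemma isOpen_inner_pos (β : V) : IsOpen {u : V | 0 < ⟪β, u⟫} :=
  isOpen_lt continuous_const (continuous_const.inner continuous_id)

lemma isOpen_inner_neg (β : V) : IsOpen {u : V | ⟪β, u⟫ < 0} :=
  isOpen_lt (continuous_const.inner continuous_id) continuous_const

lemma samesign_of_mem_component (α : V) {S : Set V} (hS : S.Finite) {x y : V}
    (hx : x ∈ hset α S) (hy : y ∈ connectedComponentIn (hset α S) x) :
    ∀ β ∈ S, (0 < ⟪β, x⟫ ↔ 0 < ⟪β, y⟫) := by
  set U : Set V := ⋂ β ∈ S,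
    {u | (0 < ⟪β, x⟫ → 0 < ⟪β, u⟫) ∧ (⟪β, x⟫ < 0 → ⟪β, u⟫ < 0)} with hU
  set W : Set V := ⋃ β ∈ S,
    {u | (0 < ⟪β, x⟫ ∧ ⟪β, u⟫ < 0) ∨ (⟪β, x⟫ < 0 ∧ 0 < ⟪β, u⟫)} with hW
  have hUopen : IsOpen U := by
    refine hS.isOpen_biInter fun β hβ => ?_
    have h1 : IsOpen {u : V | 0 < ⟪β, x⟫ → 0 < ⟪β, u⟫} := by
      by_cases h : 0 < ⟪β, x⟫
      · have he : {u : V | 0 < ⟪β, x⟫ → 0 < ⟪β, u⟫} = {u : V | 0 < ⟪β, u⟫} := by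
          ext u; simp [h]
        rw [he]; exact isOpen_inner_pos β
      · have he : {u : V | 0 < ⟪β, x⟫ → 0 < ⟪β, u⟫} = Set.univ := by
          ext u; simp [h]
        rw [he]; exact isOpen_univ
    have h2 : IsOpen {u : V | ⟪β, x⟫ < 0 → ⟪β, u⟫ < 0} := by
      by_cases h : ⟪β, x⟫ < 0
      · have he : {u : V | ⟪β, x⟫ < 0 → ⟪β, u⟫ < 0} = {u : V | ⟪β, u⟫ < 0} := by
          ext u; simp [h]
        rw [he]; exact isOpen_inner_neg β
      · have he : {u : V | ⟪β, x⟫ < 0 → ⟪β, u⟫ < 0} = Set.univ := by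
          ext u; simp [h]
        rw [he]; exact isOpen_univ
    exact (Set.setOf_and ..) ▸ h1.inter h2
  have hWopen : IsOpen W := by
    refine isOpen_biUnion fun β hβ => ?_
    have h1 : IsOpen {u : V | 0 < ⟪β, x⟫ ∧ ⟪β, u⟫ < 0} := by
      by_cases h : 0 < ⟪β, x⟫
      · have he : {u : V | 0 < ⟪β, x⟫ ∧ ⟪β, u⟫ < 0} = {u : V | ⟪β, u⟫ < 0} := by
          ext u; simp [h]
        rw [he]; exact isOpen_inner_neg β
      · have he : {u : V | 0 < ⟪β, x⟫ ∧ ⟪β, u⟫ < 0} = ∅ := by ext u; simp [h]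
        rw [he]; exact isOpen_empty
    have h2 : IsOpen {u : V | ⟪β, x⟫ < 0 ∧ 0 < ⟪β, u⟫} := by
      by_cases h : ⟪β, x⟫ < 0
      · have he : {u : V | ⟪β, x⟫ < 0 ∧ 0 < ⟪β, u⟫} = {u : V | 0 < ⟪β, u⟫} := by
          ext u; simp [h]
        rw [he]; exact isOpen_inner_pos β
      · have he : {u : V | ⟪β, x⟫ < 0 ∧ 0 < ⟪β, u⟫} = ∅ := by ext u; simp [h]
        rw [he]; exact isOpen_empty
    exact (Set.setOf_or ..) ▸ h1.union h2
  have hdisj : Disjoint U W := by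
    rw [Set.disjoint_left]
    intro u hu huW
    rw [hW, Set.mem_iUnion₂] at huW
    obtain ⟨β, hβ, hcase⟩ := huW
    rw [hU, Set.mem_iInter₂] at hu
    obtain ⟨hu1, hu2⟩ := hu β hβ
    rcases hcase with ⟨h1, h2⟩ | ⟨h1, h2⟩
    · exact absurd (hu1 h1) (by linarith)
    · exact absurd (hu2 h1) (by linarith)
  have hcover : hset α S ⊆ U ∪ W := by
    intro u hu
    by_cases h : u ∈ U
    · exact Or.inl h
    · refine Or.inr ?_
      rw [hU, Set.mem_iInter₂] at h
      push_neg at h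
      obtain ⟨β, hβ, hno⟩ := h
      rw [hW, Set.mem_iUnion₂]
      refine ⟨β, hβ, ?_⟩
      rw [Set.mem_setOf_eq, not_and_or] at hno
      rcases hno with hno | hno
      · rw [Classical.not_imp] at hno
        obtain ⟨h1, h2⟩ := hno
        left
        refine ⟨h1, ?_⟩
        rcases lt_or_gt_of_ne (hu.2 β hβ) with h' | h'
        · exact h'
        · exact absurd h' h2
      · rw [Classical.not_imp] at hno
        obtain ⟨h1, h2⟩ := hno
        right
        refine ⟨h1, ?_⟩
        rcases lt_or_gt_of_ne (hu.2 β hβ) with h' | h'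
        · exact absurd h' h2
        · exact h'
  have hxU : x ∈ U := by
    rw [hU, Set.mem_iInter₂]
    exact fun β hβ => ⟨id, id⟩
  have hsub : connectedComponentIn (hset α S) x ⊆ U := by
    refine IsPreconnected.subset_left_of_subset_union hUopen hWopen hdisj
      ((connectedComponentIn_subset _ _).trans hcover)
      ⟨x, mem_connectedComponentIn hx, hxU⟩ (isPreconnected_connectedComponentIn)
  have hyU := hsub hy
  rw [hU, Set.mem_iInter₂] at hyU
  intro β hβ
  obtain ⟨h1, h2⟩ := hyU β hβ
  constructor
  · exact h1
  · intro hypos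
    by_contra hxpos
    rcases lt_or_gt_of_ne (hx.2 β hβ) with h' | h'
    · exact absurd (h2 h') (by linarith)
    · exact hxpos h'

lemma apply_inv_apply (u : V ≃ₗᵢ[ℝ] V) (x : V) : u (u⁻¹ x) = x := by
  rw [LinearIsometryEquiv.coe_inv]; exact u.apply_symm_apply x

lemma inv_apply_apply (u : V ≃ₗᵢ[ℝ] V) (x : V) : u⁻¹ (u x) = x := by
  rw [LinearIsometryEquiv.coe_inv]; exact u.symm_apply_apply x

lemma inner_w_left (u : V ≃ₗᵢ[ℝ] V) (x y : V) : ⟪x, u y⟫ = ⟪u⁻¹ x, y⟫ := by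
  conv_lhs => rw [← apply_inv_apply u x]
  rw [inner_w]

lemma image_inv_image (w : V ≃ₗᵢ[ℝ] V) (F : Set V) : ⇑w⁻¹ '' (⇑w '' F) = F := by
  rw [← Set.image_comp]
  have h : ⇑w⁻¹ ∘ ⇑w = id := funext (inv_apply_apply w)
  rw [h, Set.image_id]

theorem crux (S : Set V) (z : V) (hfin : S.Finite) (hnz : ∀ β ∈ S, β ≠ 0)
    (hrefl : ∀ β ∈ S, ∀ γ ∈ S, reflAt β γ ∈ S)
    (hred : ∀ β ∈ S, ∀ t : ℝ, t • β ∈ S → t = 1 ∨ t = -1)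
    (hreg : ∀ β ∈ S, ⟪β, z⟫ ≠ 0)
    (w : V ≃ₗᵢ[ℝ] V) (hw : w ∈ Subgroup.closure {g : V ≃ₗᵢ[ℝ] V | ∃ β ∈ S, g = reflAt β})
    (hpos : ∀ β ∈ S, 0 < ⟪β, z⟫ → 0 < ⟪w β, z⟫) : w = 1 := by
  -- members of the closure map `S` into `S`
  have hSmem : ∀ u ∈ Subgroup.closure {g : V ≃ₗᵢ[ℝ] V | ∃ β ∈ S, g = reflAt β},
      (∀ β ∈ S, u β ∈ S) ∧ (∀ β ∈ S, u⁻¹ β ∈ S) := by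
    intro u hu
    induction hu using Subgroup.closure_induction with
    | mem g hg =>
      obtain ⟨β₀, hβ₀, rfl⟩ := hg
      have hinv : (reflAt β₀)⁻¹ = reflAt β₀ := reflAt_inv β₀
      exact ⟨fun β hβ => hrefl β₀ hβ₀ β hβ, fun β hβ => by rw [hinv]; exact hrefl β₀ hβ₀ β hβ⟩
    | one => simpa using ⟨fun β hβ => hβ, fun β hβ => hβ⟩
    | mul a b ha hb iha ihb =>
      refine ⟨fun β hβ => ?_, fun β hβ => ?_⟩
      · simpa [LinearIsometryEquiv.coe_mul] using iha.1 _ (ihb.1 β hβ)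
      · simpa [mul_inv_rev, LinearIsometryEquiv.coe_mul] using ihb.2 _ (iha.2 β hβ)
    | inv a ha iha => exact ⟨iha.2, by simpa using iha.1⟩
  -- S is symmetric
  have hsymm : ∀ β ∈ S, -β ∈ S := by
    intro β hβ
    have := hrefl β hβ β hβ
    rwa [reflAt_self (hnz β hβ)] at this
  -- the positive roots
  set Sp : Finset V := hfin.toFinset.filter (fun β => 0 < ⟪β, z⟫) with hSp
  have mem_Sp : ∀ {β : V}, β ∈ Sp ↔ β ∈ S ∧ 0 < ⟪β, z⟫ := by
    intro β; simp [hSp, Set.Finite.mem_toFinset]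
  have hSplit : ∀ β ∈ S, β ∈ Sp ∨ (-β ∈ Sp ∧ ⟪β, z⟫ < 0) := by
    intro β hβ
    rcases lt_or_gt_of_ne (hreg β hβ) with h | h
    · right
      refine ⟨mem_Sp.mpr ⟨hsymm β hβ, ?_⟩, h⟩
      rw [inner_neg_left]; linarith
    · left; exact mem_Sp.mpr ⟨hβ, h⟩
  -- choose a minimal cone-generating subset Δ of Sp
  have hPSp : Sp ⊆ Sp ∧ ∀ β ∈ Sp, InCone Sp β := ⟨le_refl _, fun β hβ => inCone_of_mem hβ⟩
  have hex : ∃ n, ∃ D : Finset V, (D ⊆ Sp ∧ ∀ β ∈ Sp, InCone D β) ∧ D.card = n :=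
    ⟨Sp.card, Sp, hPSp, rfl⟩
  obtain ⟨Δ, hΔP, hΔcard⟩ := Nat.find_spec hex
  have hmin : ∀ D : Finset V, (D ⊆ Sp ∧ ∀ β ∈ Sp, InCone D β) → Nat.find hex ≤ D.card :=
    fun D hD => Nat.find_le ⟨D, hD, rfl⟩
  have hΔSp : Δ ⊆ Sp := hΔP.1
  have hΔcone : ∀ β ∈ Sp, InCone Δ β := hΔP.2
  have hΔS : ∀ δ ∈ Δ, δ ∈ S := fun δ hδ => (mem_Sp.mp (hΔSp hδ)).1
  have hΔz : ∀ δ ∈ Δ, 0 < ⟪δ, z⟫ := fun δ hδ => (mem_Sp.mp (hΔSp hδ)).2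
  -- pairwise non-positive inner products
  have hA : ∀ δ ∈ Δ, ∀ δ' ∈ Δ, δ ≠ δ' → ⟪δ, δ'⟫ ≤ 0 := by
    intro δ hδ δ' hδ' hne
    by_contra hpp
    push_neg at hpp
    have hδS := hΔS δ hδ
    have hδ'S := hΔS δ' hδ'
    have hδδ : (0:ℝ) < ⟪δ, δ⟫ := inner_self_pos' (hnz δ hδS)
    set c : ℝ := 2 * ⟪δ, δ'⟫ / ⟪δ, δ⟫ with hc
    have hcpos : 0 < c := div_pos (by linarith) hδδ
    have hsγ : reflAt δ δ' = δ' - c • δ := reflAt_apply δ δ'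
    have hsγS : δ' - c • δ ∈ S := by rw [← hsγ]; exact hrefl δ hδS δ' hδ'S
    have hcard : 0 < Δ.card := Finset.card_pos.mpr ⟨δ, hδ⟩
    rcases lt_or_gt_of_ne (hreg _ hsγS) with hneg | hposs
    · -- ⟪δ' - c•δ, z⟫ < 0 : use  c•δ - δ' ∈ Sp
      have hmem' : c • δ - δ' ∈ S := by
        have := hsymm _ hsγS; rwa [neg_sub] at this
      have hmemSp : c • δ - δ' ∈ Sp := by
        refine mem_Sp.mpr ⟨hmem', ?_⟩
        have : ⟪δ' - c • δ + (c • δ - δ'), z⟫ = 0 := by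
          rw [show δ' - c • δ + (c • δ - δ') = 0 by abel, inner_zero_left]
        rw [inner_add_left] at this
        linarith
      obtain ⟨e, he0, hesum⟩ := hΔcone _ hmemSp
      have hsplit : (c - e δ) • δ = δ' + ∑ v ∈ Δ.erase δ, e v • v := by
        have h7 := Finset.add_sum_erase Δ (fun v => e v • v) hδ
        rw [← h7] at hesum
        linear_combination (norm := module) hesum
      have hsum0 : (0:ℝ) ≤ ⟪∑ v ∈ Δ.erase δ, e v • v, z⟫ :=
        inCone_inner_nonneg (inCone_sum e (fun v hv => he0 v (Finset.mem_of_mem_erase hv)))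
          (fun v hv => le_of_lt (hΔz v (Finset.mem_of_mem_erase hv)))
      rcases le_or_gt (c - e δ) 0 with hle | hlt
      · have h8 := congrArg (fun u => ⟪u, z⟫) hsplit
        simp only [inner_add_left, real_inner_smul_left] at h8
        have h9 : (c - e δ) * ⟪δ, z⟫ ≤ 0 :=
          mul_nonpos_iff.mpr (Or.inr ⟨hle, le_of_lt (hΔz δ hδ)⟩)
        have h10 := hΔz δ' hδ'
        linarith
      · have h11 : δ' ∈ Δ.erase δ := Finset.mem_erase.mpr ⟨hne.symm, hδ'⟩
        have h12 : InCone (Δ.erase δ) ((c - e δ) • δ) := by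
          rw [hsplit]
          exact inCone_add (inCone_of_mem h11)
            (inCone_sum e (fun v hv => he0 v (Finset.mem_of_mem_erase hv)))
        have h13 : InCone (Δ.erase δ) δ := inCone_div hlt h12
        have h14 := hmin (Δ.erase δ)
          ⟨(Finset.erase_subset δ Δ).trans hΔSp,
           fun β hβ => inCone_erase (hΔcone β hβ) h13⟩
        rw [Finset.card_erase_of_mem hδ] at h14
        omega
    · -- ⟪δ' - c•δ, z⟫ > 0
      have hmemSp : δ' - c • δ ∈ Sp := mem_Sp.mpr ⟨hsγS, hposs⟩
      obtain ⟨e, he0, hesum⟩ := hΔcone _ hmemSp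
      have hsplit : (1 - e δ') • δ' = c • δ + ∑ v ∈ Δ.erase δ', e v • v := by
        have h7 := Finset.add_sum_erase Δ (fun v => e v • v) hδ'
        rw [← h7] at hesum
        linear_combination (norm := module) hesum
      have hsum0 : (0:ℝ) ≤ ⟪∑ v ∈ Δ.erase δ', e v • v, z⟫ :=
        inCone_inner_nonneg (inCone_sum e (fun v hv => he0 v (Finset.mem_of_mem_erase hv)))
          (fun v hv => le_of_lt (hΔz v (Finset.mem_of_mem_erase hv)))
      rcases le_or_gt (1 - e δ') 0 with hle | hlt
      · have h8 := congrArg (fun u => ⟪u, z⟫) hsplit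
        simp only [inner_add_left, real_inner_smul_left] at h8
        have h9 : (1 - e δ') * ⟪δ', z⟫ ≤ 0 :=
          mul_nonpos_iff.mpr (Or.inr ⟨hle, le_of_lt (hΔz δ' hδ')⟩)
        have h10 := hΔz δ hδ
        have h11 : 0 < c * ⟪δ, z⟫ := mul_pos hcpos h10
        linarith
      · have h11 : δ ∈ Δ.erase δ' := Finset.mem_erase.mpr ⟨hne, hδ⟩
        have h12 : InCone (Δ.erase δ') ((1 - e δ') • δ') := by
          rw [hsplit]
          exact inCone_add (inCone_smul (le_of_lt hcpos) (inCone_of_mem h11))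
            (inCone_sum e (fun v hv => he0 v (Finset.mem_of_mem_erase hv)))
        have h13 : InCone (Δ.erase δ') δ' := inCone_div hlt h12
        have h14 := hmin (Δ.erase δ')
          ⟨(Finset.erase_subset δ' Δ).trans hΔSp,
           fun β hβ => inCone_erase (hΔcone β hβ) h13⟩
        rw [Finset.card_erase_of_mem hδ'] at h14
        omega

  -- linear independence of Δ
  have hLI : ∀ a : V → ℝ, (∑ v ∈ Δ, a v • v = 0) → ∀ v ∈ Δ, a v = 0 := by
    intro a hsum0
    set Pp := Δ.filter (fun v => 0 < a v) with hPp
    set Nn := Δ.filter (fun v => ¬ 0 < a v) with hNn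
    have hsplitP : (∑ v ∈ Pp, a v • v) + ∑ v ∈ Nn, a v • v = 0 := by
      rw [hPp, hNn, Finset.sum_filter_add_sum_filter_not]; exact hsum0
    set u := ∑ v ∈ Pp, a v • v with hu
    have huN : u = ∑ v ∈ Nn, (-(a v)) • v := by
      have h1 : u = -∑ v ∈ Nn, a v • v := by
        rw [hu]; linear_combination (norm := module) hsplitP
      rw [h1, ← Finset.sum_neg_distrib]
      exact Finset.sum_congr rfl fun v _ => (neg_smul _ _).symm
    have hdisj : ∀ p ∈ Pp, ∀ n ∈ Nn, p ≠ n := by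
      intro p hp n hn he
      rw [hPp, Finset.mem_filter] at hp; rw [hNn, Finset.mem_filter] at hn
      exact hn.2 (he ▸ hp.2)
    have huu : ⟪u, u⟫ ≤ 0 := by
      have heq : ⟪u, u⟫ = ⟪∑ v ∈ Pp, a v • v, ∑ v ∈ Nn, (-(a v)) • v⟫ := by
        rw [← hu, ← huN]
      rw [heq, sum_inner]
      refine Finset.sum_nonpos fun p hp => ?_
      rw [real_inner_smul_left, inner_sum]
      have hap : 0 < a p := (Finset.mem_filter.mp hp).2
      refine mul_nonpos_iff.mpr (Or.inl ⟨le_of_lt hap, ?_⟩)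
      refine Finset.sum_nonpos fun n hn => ?_
      rw [real_inner_smul_right]
      have han : ¬ 0 < a n := (Finset.mem_filter.mp hn).2
      have hpn : ⟪p, n⟫ ≤ 0 :=
        hA p (Finset.mem_of_mem_filter p hp) n (Finset.mem_of_mem_filter n hn) (hdisj p hp n hn)
      exact mul_nonpos_iff.mpr (Or.inl ⟨by linarith, hpn⟩)
    have hu0 : u = 0 := real_inner_self_nonpos.mp huu
    have hP0 : Pp = ∅ := by
      by_contra hne
      have h2 : 0 < ⟪u, z⟫ := by
        rw [hu, sum_inner]
        refine Finset.sum_pos (fun v hv => ?_) (Finset.nonempty_of_ne_empty hne)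
        rw [real_inner_smul_left]
        exact mul_pos (Finset.mem_filter.mp hv).2 (hΔz v (Finset.mem_of_mem_filter v hv))
      rw [hu0, inner_zero_left] at h2
      exact lt_irrefl _ h2
    have hnonpos : ∀ v ∈ Δ, a v ≤ 0 := by
      intro v hv
      by_contra h
      push_neg at h
      have : v ∈ Pp := Finset.mem_filter.mpr ⟨hv, h⟩
      rw [hP0] at this; exact absurd this (Finset.notMem_empty v)
    have hz0 : (∑ v ∈ Δ, a v * ⟪v, z⟫) = 0 := by
      have := congrArg (fun u => ⟪u, z⟫) hsum0
      simpa [sum_inner, real_inner_smul_left] using this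
    intro v hv
    have hall := (Finset.sum_eq_zero_iff_of_nonpos
      (fun i hi => mul_nonpos_iff.mpr (Or.inr ⟨hnonpos i hi, le_of_lt (hΔz i hi)⟩))).mp hz0 v hv
    rcases mul_eq_zero.mp hall with h | h
    · exact h
    · exact absurd h (ne_of_gt (hΔz v hv))

  -- the reflection in a simple root permutes the other positive roots
  have hperm : ∀ δ ∈ Δ, ∀ γ ∈ Sp, γ ≠ δ → reflAt δ γ ∈ Sp ∧ reflAt δ γ ≠ δ := by
    intro δ hδ γ hγSp hneq
    have hδS := hΔS δ hδ
    have hγS := (mem_Sp.mp hγSp).1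
    have hγz := (mem_Sp.mp hγSp).2
    obtain ⟨e, he0, hesum⟩ := hΔcone γ hγSp
    have hex' : ∃ γ' ∈ Δ, γ' ≠ δ ∧ 0 < e γ' := by
      by_contra hcon
      push_neg at hcon
      have h1 : γ = e δ • δ := by
        rw [hesum, ← Finset.add_sum_erase Δ _ hδ]
        have hz' : ∑ v ∈ Δ.erase δ, e v • v = 0 := Finset.sum_eq_zero fun v hv => by
          have hv' := Finset.mem_erase.mp hv
          have hev : e v = 0 := le_antisymm (hcon v hv'.2 hv'.1) (he0 v hv'.2)
          rw [hev, zero_smul]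
        rw [hz', add_zero]
      rcases hred δ hδS (e δ) (h1 ▸ hγS) with h | h
      · rw [h, one_smul] at h1; exact hneq h1
      · rw [h, neg_one_smul] at h1
        have h2 : ⟪γ, z⟫ = -⟪δ, z⟫ := by rw [h1, inner_neg_left]
        have := hΔz δ hδ; linarith
    obtain ⟨γ₀, hγ₀Δ, hγ₀ne, hγ₀pos⟩ := hex'
    set c : ℝ := 2 * ⟪δ, γ⟫ / ⟪δ, δ⟫ with hc
    have hrγ : reflAt δ γ = γ - c • δ := reflAt_apply δ γ
    have hrS : γ - c • δ ∈ S := by rw [← hrγ]; exact hrefl δ hδS γ hγS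
    have hrpos : 0 < ⟪γ - c • δ, z⟫ := by
      rcases lt_or_gt_of_ne (hreg _ hrS) with hlt | hgt
      · exfalso
        have hnS : c • δ - γ ∈ S := by have := hsymm _ hrS; rwa [neg_sub] at this
        have hnSp : c • δ - γ ∈ Sp := mem_Sp.mpr ⟨hnS, by
          rw [show c • δ - γ = -(γ - c • δ) by abel, inner_neg_left]; linarith⟩
        obtain ⟨f, hf0, hfsum⟩ := hΔcone _ hnSp
        have hite : ∑ v ∈ Δ, (if v = δ then c else 0) • v = c • δ := by
          have hcong : ∀ v ∈ Δ, (if v = δ then c else 0) • v = (if v = δ then c • v else 0) := by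
            intro v _; split <;> simp
          rw [Finset.sum_congr rfl hcong, Finset.sum_ite_eq' Δ δ (fun v => c • v), if_pos hδ]
        have hkey : ∑ v ∈ Δ, ((e v + f v) - (if v = δ then c else 0)) • v = 0 := by
          have hcong : ∀ v ∈ Δ, ((e v + f v) - (if v = δ then c else 0)) • v
              = (e v • v + f v • v) - (if v = δ then c else 0) • v := by
            intro v _; rw [sub_smul, add_smul]
          rw [Finset.sum_congr rfl hcong, Finset.sum_sub_distrib, Finset.sum_add_distrib,
            ← hesum, ← hfsum, hite]
          abel
        have hres := hLI _ hkey γ₀ hγ₀Δ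
        rw [if_neg hγ₀ne] at hres
        have := hf0 γ₀ hγ₀Δ
        simp only [sub_zero] at hres
        linarith
      · exact hgt
    have h1 : reflAt δ γ ∈ Sp := mem_Sp.mpr ⟨by rw [hrγ]; exact hrS, by rw [hrγ]; exact hrpos⟩
    refine ⟨h1, fun heq => ?_⟩
    have h2 : γ = reflAt δ δ := by
      have := congrArg (reflAt δ) heq
      rwa [reflAt_reflAt] at this
    rw [reflAt_self (hnz δ hδS)] at h2
    have := hΔz δ hδ
    rw [h2, inner_neg_left] at hγz
    linarith

  have hgen : ∀ γ ∈ Sp, reflAt γ ∈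
      Subgroup.closure {g : V ≃ₗᵢ[ℝ] V | ∃ δ ∈ (Δ : Finset V), g = reflAt δ} := by
    have hmeas : ∀ n : ℕ, ∀ γ ∈ Sp, (Sp.filter (fun β => ⟪β, z⟫ < ⟪γ, z⟫)).card = n →
        reflAt γ ∈ Subgroup.closure {g : V ≃ₗᵢ[ℝ] V | ∃ δ ∈ (Δ : Finset V), g = reflAt δ} := by
      intro n
      induction n using Nat.strong_induction_on with
      | _ n IH =>
        intro γ hγSp hn
        by_cases hγΔ : γ ∈ Δ
        · exact Subgroup.subset_closure ⟨γ, hγΔ, rfl⟩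
        · obtain ⟨e, he0, hesum⟩ := hΔcone γ hγSp
          have hγS := (mem_Sp.mp hγSp).1
          have hγγ : 0 < ⟪γ, γ⟫ := inner_self_pos' (hnz γ hγS)
          have hexδ : ∃ δ ∈ Δ, 0 < e δ * ⟪δ, γ⟫ := by
            by_contra hc; push_neg at hc
            have hle : ⟪γ, γ⟫ ≤ 0 := by
              have heq2 : ⟪γ, γ⟫ = ⟪∑ v ∈ Δ, e v • v, γ⟫ := by rw [← hesum]
              rw [heq2, sum_inner]
              refine Finset.sum_nonpos fun v hv => ?_
              rw [real_inner_smul_left]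
              exact hc v hv
            linarith
          obtain ⟨δ, hδΔ, hprod⟩ := hexδ
          have heδ : 0 < e δ := by
            rcases lt_or_eq_of_le (he0 δ hδΔ) with h | h
            · exact h
            · rw [← h, zero_mul] at hprod; linarith
          have hδγ : 0 < ⟪δ, γ⟫ := by
            by_contra h; push_neg at h
            have := mul_nonpos_iff.mpr (Or.inl ⟨le_of_lt heδ, h⟩)
            linarith
          have hγδ : γ ≠ δ := fun h => hγΔ (h ▸ hδΔ)
          obtain ⟨hγ'Sp, hγ'ne⟩ := hperm δ hδΔ γ hγSp hγδ
          have hcval : reflAt δ γ = γ - (2 * ⟪δ, γ⟫ / ⟪δ, δ⟫) • δ := reflAt_apply δ γ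
          have hδδ : 0 < ⟪δ, δ⟫ := inner_self_pos' (hnz δ (hΔS δ hδΔ))
          have hlt : ⟪reflAt δ γ, z⟫ < ⟪γ, z⟫ := by
            rw [hcval, inner_sub_left, real_inner_smul_left]
            have hd : 0 < 2 * ⟪δ, γ⟫ / ⟪δ, δ⟫ := div_pos (by linarith) hδδ
            nlinarith [mul_pos hd (hΔz δ hδΔ)]
          have hsub : Sp.filter (fun β => ⟪β, z⟫ < ⟪reflAt δ γ, z⟫)
              ⊂ Sp.filter (fun β => ⟪β, z⟫ < ⟪γ, z⟫) := by
            refine (Finset.ssubset_iff_of_subset (fun β hβ => ?_)).mpr ?_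
            · rw [Finset.mem_filter] at hβ ⊢
              exact ⟨hβ.1, lt_trans hβ.2 hlt⟩
            exact ⟨reflAt δ γ, Finset.mem_filter.mpr ⟨hγ'Sp, hlt⟩,
              fun hmem => (lt_irrefl _ (Finset.mem_filter.mp hmem).2)⟩
          have hrec := IH _ (by rw [← hn]; exact Finset.card_lt_card hsub) (reflAt δ γ) hγ'Sp rfl
          have hback : reflAt γ = (reflAt δ) * reflAt (reflAt δ γ) * (reflAt δ)⁻¹ := by
            rw [← reflAt_conj (reflAt δ) (reflAt δ γ), reflAt_reflAt]
          rw [hback]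
          have hδW : reflAt δ ∈ Subgroup.closure
              {g : V ≃ₗᵢ[ℝ] V | ∃ δ' ∈ (Δ : Finset V), g = reflAt δ'} :=
            Subgroup.subset_closure ⟨δ, hδΔ, rfl⟩
          exact mul_mem (mul_mem hδW hrec) (inv_mem hδW)
    intro γ hγ; exact hmeas _ γ hγ rfl
  have hwΔ : w ∈ Subgroup.closure {g : V ≃ₗᵢ[ℝ] V | ∃ δ ∈ (Δ : Finset V), g = reflAt δ} := by
    have hle : Subgroup.closure {g : V ≃ₗᵢ[ℝ] V | ∃ β ∈ S, g = reflAt β}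
        ≤ Subgroup.closure {g : V ≃ₗᵢ[ℝ] V | ∃ δ ∈ (Δ : Finset V), g = reflAt δ} := by
      rw [Subgroup.closure_le]
      rintro g ⟨β, hβ, rfl⟩
      rcases hSplit β hβ with h | ⟨h, _⟩
      · exact hgen β h
      · rw [← reflAt_neg β]; exact hgen _ h
    exact hle hw
  have hwordAll : ∀ u, u ∈ Subgroup.closure {g : V ≃ₗᵢ[ℝ] V | ∃ δ ∈ (Δ : Finset V), g = reflAt δ} →
      ∃ l : List V, (∀ v ∈ l, v ∈ Δ) ∧ (l.map reflAt).prod = u := by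
    intro u hu
    induction hu using Subgroup.closure_induction with
    | mem g hg =>
      obtain ⟨δ, hδ, rfl⟩ := hg
      exact ⟨[δ], by simp [hδ], by simp⟩
    | one => exact ⟨[], by simp, by simp⟩
    | mul a b _ _ iha ihb =>
      obtain ⟨la, hla, hpa⟩ := iha; obtain ⟨lb, hlb, hpb⟩ := ihb
      refine ⟨la ++ lb, ?_, ?_⟩
      · intro v hv; rcases List.mem_append.mp hv with h | h; exacts [hla v h, hlb v h]
      · rw [List.map_append, List.prod_append, hpa, hpb]
    | inv a _ iha =>
      obtain ⟨la, hla, hpa⟩ := iha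
      exact ⟨la.reverse, fun v hv => hla v (List.mem_reverse.mp hv),
        by rw [← prod_reflAt_inv, hpa]⟩
  have hword := hwordAll w hwΔ
  have lemD : ∀ l : List V, (∀ v ∈ l, v ∈ Δ) → ∀ δ ∈ Δ,
      ⟪((l.map reflAt).prod) δ, z⟫ < 0 →
      ∃ l₂ : List V, (∀ v ∈ l₂, v ∈ Δ) ∧ l₂.length + 1 = l.length ∧
        (l₂.map reflAt).prod = (l.map reflAt).prod * reflAt δ := by
    intro l
    induction l with
    | nil =>
      intro _ δ hδ hlt
      simp only [List.map_nil, List.prod_nil, LinearIsometryEquiv.coe_one, id_eq] at hlt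
      exact absurd hlt (not_lt.mpr (le_of_lt (hΔz δ hδ)))
    | cons δ₁ rest IH =>
      intro hmem δ hδ hlt
      have hδ₁ : δ₁ ∈ Δ := hmem δ₁ List.mem_cons_self
      have hrestmem : ∀ v ∈ rest, v ∈ Δ := fun v hv => hmem v (List.mem_cons_of_mem _ hv)
      set u' := (rest.map reflAt).prod with hu'
      have hprodcons : ((δ₁ :: rest).map reflAt).prod = reflAt δ₁ * u' := by
        rw [List.map_cons, List.prod_cons]
      by_cases hneg : ⟪u' δ, z⟫ < 0
      · obtain ⟨l₂, hl₂mem, hl₂len, hl₂prod⟩ := IH hrestmem δ hδ hneg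
        refine ⟨δ₁ :: l₂, ?_, ?_, ?_⟩
        · intro v hv; rcases List.mem_cons.mp hv with h | h; exacts [h ▸ hδ₁, hl₂mem v h]
        · simp only [List.length_cons]; omega
        · rw [List.map_cons, List.prod_cons, hl₂prod, hprodcons, mul_assoc]
      · have hu'W : u' ∈ Subgroup.closure {g : V ≃ₗᵢ[ℝ] V | ∃ β ∈ S, g = reflAt β} :=
          list_prod_mem_closure rest (fun v hv => hΔS v (hrestmem v hv))
        have hu'δS : u' δ ∈ S := (hSmem u' hu'W).1 δ (hΔS δ hδ)
        have hu'δSp : u' δ ∈ Sp := mem_Sp.mpr ⟨hu'δS,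
          lt_of_le_of_ne (not_lt.mp hneg) (Ne.symm (hreg _ hu'δS))⟩
        have hlt' : ⟪reflAt δ₁ (u' δ), z⟫ < 0 := by
          have hc : ((δ₁ :: rest).map reflAt).prod δ = reflAt δ₁ (u' δ) := by
            rw [hprodcons]; rfl
          rwa [hc] at hlt
        have heq : u' δ = δ₁ := by
          by_contra hne
          obtain ⟨hSp', _⟩ := hperm δ₁ hδ₁ (u' δ) hu'δSp hne
          have := (mem_Sp.mp hSp').2
          linarith
        have hconj : reflAt δ₁ = u' * reflAt δ * u'⁻¹ := by
          rw [← heq]; exact reflAt_conj u' δ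
        refine ⟨rest, hrestmem, by simp, ?_⟩
        rw [hprodcons, hconj, mul_assoc (u' * reflAt δ) u'⁻¹ u', inv_mul_cancel, mul_one,
          mul_assoc, reflAt_mul_self, mul_one]
  -- conclusion: take a word for w of minimal length
  have hex2 : ∃ n, ∃ l : List V, ((∀ v ∈ l, v ∈ Δ) ∧ (l.map reflAt).prod = w) ∧ l.length = n := by
    obtain ⟨l, h1, h2⟩ := hword; exact ⟨l.length, l, ⟨h1, h2⟩, rfl⟩
  obtain ⟨l, ⟨hlmem, hlprod⟩, hllen⟩ := Nat.find_spec hex2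
  rcases List.eq_nil_or_concat l with rfl | ⟨l', δ, rfl⟩
  · rw [← hlprod]; simp
  · exfalso
    rw [List.concat_eq_append] at hlmem hlprod hllen
    have hδΔ : δ ∈ Δ := hlmem δ (by simp)
    have hl'mem : ∀ v ∈ l', v ∈ Δ := fun v hv => hlmem v (by simp [hv])
    set u := (l'.map reflAt).prod with hu
    have hsplit : (((l' ++ [δ]).map reflAt).prod) = u * reflAt δ := by
      rw [List.map_append, List.prod_append]; simp [hu]
    have hwu : w = u * reflAt δ := (hsplit.symm.trans hlprod).symm
    have hδS' : δ ∈ S := hΔS δ hδΔ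
    have hwδ : 0 < ⟪w δ, z⟫ := hpos δ hδS' (hΔz δ hδΔ)
    have hwδval : w δ = -(u δ) := by
      rw [hwu]
      simp only [LinearIsometryEquiv.coe_mul, Function.comp_apply]
      rw [reflAt_self (hnz δ hδS'), map_neg]
    have huneg : ⟪u δ, z⟫ < 0 := by
      have hninner : ⟪w δ, z⟫ = -⟪u δ, z⟫ := by rw [hwδval, inner_neg_left]
      linarith
    obtain ⟨l₂, hl₂mem, hl₂len, hl₂prod⟩ := lemD l' hl'mem δ hδΔ huneg
    have hl₂w : (l₂.map reflAt).prod = w := by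
      rw [hl₂prod, hwu, hu]
    have hle : Nat.find hex2 ≤ l₂.length := Nat.find_le ⟨l₂, ⟨hl₂mem, hl₂w⟩, rfl⟩
    have hlen' : (l' ++ [δ]).length = l'.length + 1 := by simp
    omega

/-- Every facet spanning the root hyperplane `X_α` is contained in exactly one chamber of `X_α`
for the root system induced on `X_α`; moreover the number of orbits of the Weyl group `W_α` of
this induced system on the set of such facets equals the number of facets lying in any single
chamber of `X_α`. -/
theorem facets_in_hyperplane_chambers (R : Set V) (hR : IsRootSystem R)
    (α : V) (hα : α ∈ R) :
    (∀ F ∈ hypFacets R α, ∃! C, C ∈ hypChambers R α ∧ F ⊆ C) ∧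
    (∀ C ∈ hypChambers R α,
      {O : Set (Set V) | ∃ F ∈ hypFacets R α,
          O = {F' | ∃ w ∈ Subgroup.closure
                {g : V ≃ₗᵢ[ℝ] V | ∃ β ∈ {γ ∈ R | ⟪α, γ⟫ = 0}, g = reflAt β},
              F' = ⇑w '' F}}.ncard
        = {F ∈ hypFacets R α | F ⊆ C}.ncard) := by
  have hα0 : α ≠ 0 := hR.ne_zero α hα
  set Sα : Set V := {γ ∈ R | ⟪α, γ⟫ = 0} with hSαdef
  have hSαfin : Sα.Finite := hR.finite.subset (Set.sep_subset _ _)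
  have hSαnz : ∀ β ∈ Sα, β ≠ 0 := fun β hβ => hR.ne_zero β hβ.1
  have hSαrefl : ∀ β ∈ Sα, ∀ γ ∈ Sα, reflAt β γ ∈ Sα := by
    intro β hβ γ hγ
    constructor
    · rw [reflAt_apply]; exact hR.reflect_mem β hβ.1 γ hγ.1
    · rw [reflAt_apply, inner_sub_right, real_inner_smul_right, hβ.2, hγ.2]; ring
  have hSαred : ∀ β ∈ Sα, ∀ t : ℝ, t • β ∈ Sα → t = 1 ∨ t = -1 :=
    fun β hβ t ht => hR.reduced β hβ.1 t ht.1
  have hHeq : {y : V | ⟪α, y⟫ = 0 ∧ ∀ β ∈ R, ⟪α, β⟫ = 0 → ⟪β, y⟫ ≠ 0} = hset α Sα := by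
    ext y
    simp only [hset, Set.mem_setOf_eq, hSαdef, Set.mem_sep_iff]
    constructor
    · rintro ⟨h1, h2⟩; exact ⟨h1, fun β hβ => h2 β hβ.1 hβ.2⟩
    · rintro ⟨h1, h2⟩; exact ⟨h1, fun β hβ h' => h2 β ⟨hβ, h'⟩⟩
  have hfacet_sub : facetSet R α ⊆ hset α Sα := by
    intro y hy
    refine ⟨hy.1, fun β hβ hzero => ?_⟩
    obtain ⟨t, rfl⟩ := hy.2 β hβ.1 hzero
    have h1 : ⟪α, t • α⟫ = 0 := hβ.2
    rw [real_inner_smul_right] at h1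
    have hαα : 0 < ⟪α, α⟫ := inner_self_pos' hα0
    have ht : t = 0 := by
      rcases mul_eq_zero.mp h1 with h | h
      · exact h
      · exact absurd h (ne_of_gt hαα)
    exact hR.ne_zero _ hβ.1 (by rw [ht, zero_smul])
  set gens : Set (V ≃ₗᵢ[ℝ] V) := {g | ∃ β ∈ Sα, g = reflAt β} with hgensdef
  -- elements of the Weyl group preserve R and fix α
  have hWmain : ∀ u ∈ Subgroup.closure gens,
      (∀ γ ∈ R, u γ ∈ R) ∧ (∀ γ ∈ R, u⁻¹ γ ∈ R) ∧ u α = α ∧ u⁻¹ α = α := by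
    intro u hu
    induction hu using Subgroup.closure_induction with
    | mem g hg =>
      obtain ⟨β, hβ, rfl⟩ := hg
      have hβα : ⟪β, α⟫ = 0 := by rw [real_inner_comm]; exact hβ.2
      have hfix : reflAt β α = α := reflAt_orth hβα
      have hmapR : ∀ γ ∈ R, reflAt β γ ∈ R := fun γ hγ => by
        rw [reflAt_apply]; exact hR.reflect_mem β hβ.1 γ hγ
      exact ⟨hmapR, by rw [reflAt_inv]; exact hmapR, hfix, by rw [reflAt_inv]; exact hfix⟩
    | one =>
      exact ⟨fun γ hγ => by simpa using hγ, fun γ hγ => by simpa using hγ, by simp, by simp⟩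
    | mul a b ha hb iha ihb =>
      obtain ⟨ha1, ha2, ha3, ha4⟩ := iha
      obtain ⟨hb1, hb2, hb3, hb4⟩ := ihb
      refine ⟨fun γ hγ => ?_, fun γ hγ => ?_, ?_, ?_⟩
      · simp only [LinearIsometryEquiv.coe_mul, Function.comp_apply]
        exact ha1 _ (hb1 γ hγ)
      · rw [mul_inv_rev]
        simp only [LinearIsometryEquiv.coe_mul, Function.comp_apply]
        exact hb2 _ (ha2 γ hγ)
      · simp only [LinearIsometryEquiv.coe_mul, Function.comp_apply, hb3, ha3]
      · rw [mul_inv_rev]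
        simp only [LinearIsometryEquiv.coe_mul, Function.comp_apply, ha4, hb4]
    | inv a ha iha =>
      obtain ⟨h1, h2, h3, h4⟩ := iha
      exact ⟨h2, by simpa using h1, h4, by simpa using h3⟩
  have hWSα : ∀ u ∈ Subgroup.closure gens, ∀ β ∈ Sα, u β ∈ Sα := by
    intro u hu β hβ
    obtain ⟨h1, h2, h3, h4⟩ := hWmain u hu
    refine ⟨h1 β hβ.1, ?_⟩
    have he : ⟪α, u β⟫ = ⟪u α, u β⟫ := by rw [h3]
    rw [he, inner_w]; exact hβ.2
  have hWhyp : ∀ u ∈ Subgroup.closure gens, ∀ y ∈ hset α Sα, u y ∈ hset α Sα := by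
    intro u hu y hy
    obtain ⟨h1, h2, h3, h4⟩ := hWmain u hu
    constructor
    · have he : ⟪α, u y⟫ = ⟪u α, u y⟫ := by rw [h3]
      rw [he, inner_w]; exact hy.1
    · intro β hβ
      have hβ' : u⁻¹ β ∈ Sα := hWSα u⁻¹ (inv_mem hu) β hβ
      rw [inner_w_left]
      exact hy.2 _ hβ'
  have hWfacet : ∀ u ∈ Subgroup.closure gens, ∀ y ∈ facetSet R α, u y ∈ facetSet R α := by
    intro u hu y hy
    obtain ⟨h1, h2, h3, h4⟩ := hWmain u hu
    constructor
    · have he : ⟪α, u y⟫ = ⟪u α, u y⟫ := by rw [h3]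
      rw [he, inner_w]; exact hy.1
    · intro β hβ hzero
      rw [inner_w_left] at hzero
      obtain ⟨t, ht⟩ := hy.2 _ (h2 β hβ) hzero
      refine ⟨t, ?_⟩
      have h5 := congrArg u ht
      rw [apply_inv_apply, map_smul, h3] at h5
      exact h5
  -- the Weyl group is finite
  haveI hSαsub : Finite ↥Sα := hSαfin.to_subtype
  have hfixperp : ∀ u ∈ Subgroup.closure gens, ∀ b : V, (∀ β ∈ Sα, ⟪β, b⟫ = 0) → u b = b := by
    intro u hu
    induction hu using Subgroup.closure_induction with
    | mem g hg =>
      intro b hb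
      obtain ⟨β, hβ, rfl⟩ := hg
      exact reflAt_orth (hb β hβ)
    | one => intro b _; simp
    | mul a c ha hc iha ihc =>
      intro b hb
      simp only [LinearIsometryEquiv.coe_mul, Function.comp_apply]
      rw [ihc b hb, iha b hb]
    | inv a ha iha =>
      intro b hb
      have h := iha b hb
      calc a⁻¹ b = a⁻¹ (a b) := by rw [h]
      _ = b := inv_apply_apply a b
  haveI hWfin : Finite ↥(Subgroup.closure gens) := by
    have hinj : Function.Injective (fun u : ↥(Subgroup.closure gens) =>
        (fun s : ↥Sα => (⟨u.1 s.1, hWSα u.1 u.2 s.1 s.2⟩ : ↥Sα))) := by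
      intro u₁ u₂ h
      have hagree : ∀ β ∈ Sα, u₁.1 β = u₂.1 β := by
        intro β hβ
        exact Subtype.ext_iff.mp (congrFun h ⟨β, hβ⟩)
      refine Subtype.ext (LinearIsometryEquiv.ext fun x => ?_)
      have hx : x ∈ Submodule.span ℝ Sα ⊔ (Submodule.span ℝ Sα)ᗮ := by
        rw [Submodule.sup_orthogonal_of_hasOrthogonalProjection]; trivial
      obtain ⟨p, hp, q, hq, rfl⟩ := Submodule.mem_sup.mp hx
      have hperp : ∀ β ∈ Sα, ⟪β, q⟫ = 0 := fun β hβ =>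
        (Submodule.mem_orthogonal _ q).mp hq β (Submodule.subset_span hβ)
      have hspan : ∀ v ∈ Submodule.span ℝ Sα, u₁.1 v = u₂.1 v := by
        intro v hv
        induction hv using Submodule.span_induction with
        | mem v hv => exact hagree v hv
        | zero => simp
        | add v w _ _ ihv ihw => rw [map_add, map_add, ihv, ihw]
        | smul t v _ ihv => rw [map_smul, map_smul, ihv]
      rw [map_add, map_add, hspan p hp, hfixperp u₁.1 u₁.2 q hperp,
        hfixperp u₂.1 u₂.2 q hperp]
    exact Finite.of_injective _ hinj
  -- transitivity on chambers
  have htrans : ∀ x₁ ∈ hset α Sα, ∀ x₀ ∈ hset α Sα,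
      ∃ w ∈ Subgroup.closure gens, ∀ β ∈ Sα, (0 < ⟪β, w x₁⟫ ↔ 0 < ⟪β, x₀⟫) := by
    intro x₁ hx₁ x₀ hx₀
    haveI : Nonempty ↥(Subgroup.closure gens) := ⟨1, one_mem _⟩
    obtain ⟨w₀, hw₀⟩ := Finite.exists_max
      (fun u : ↥(Subgroup.closure gens) => ⟪u.1 x₁, x₀⟫)
    refine ⟨w₀.1, w₀.2, fun β hβ => ?_⟩
    have hw₀x : w₀.1 x₁ ∈ hset α Sα := hWhyp _ w₀.2 _ hx₁
    have ha : ⟪β, w₀.1 x₁⟫ ≠ 0 := hw₀x.2 β hβ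
    have hb : ⟪β, x₀⟫ ≠ 0 := hx₀.2 β hβ
    have hββ : 0 < ⟪β, β⟫ := inner_self_pos' (hSαnz β hβ)
    have hprod : 0 < ⟪β, w₀.1 x₁⟫ * ⟪β, x₀⟫ := by
      rcases lt_or_gt_of_ne (mul_ne_zero ha hb) with h | h
      · exfalso
        have huW : reflAt β * w₀.1 ∈ Subgroup.closure gens :=
          mul_mem (Subgroup.subset_closure ⟨β, hβ, rfl⟩) w₀.2
        have hval : ⟪(reflAt β * w₀.1) x₁, x₀⟫
            = ⟪w₀.1 x₁, x₀⟫ - (2 * ⟪β, w₀.1 x₁⟫ / ⟪β, β⟫) * ⟪β, x₀⟫ := by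
          simp only [LinearIsometryEquiv.coe_mul, Function.comp_apply]
          rw [reflAt_apply, inner_sub_left, real_inner_smul_left]
        have hneg : (2 * ⟪β, w₀.1 x₁⟫ / ⟪β, β⟫) * ⟪β, x₀⟫ < 0 := by
          have he : (2 * ⟪β, w₀.1 x₁⟫ / ⟪β, β⟫) * ⟪β, x₀⟫
              = 2 * (⟪β, w₀.1 x₁⟫ * ⟪β, x₀⟫) / ⟪β, β⟫ := by ring
          rw [he]
          exact div_neg_of_neg_of_pos (by linarith) hββ
        have hle := hw₀ ⟨reflAt β * w₀.1, huW⟩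
        simp only at hle
        rw [hval] at hle
        linarith
      · exact h
    rcases mul_pos_iff.mp hprod with ⟨h1, h2⟩ | ⟨h1, h2⟩
    · constructor <;> intro <;> assumption
    · constructor <;> intro h <;> linarith
  -- orbits are invariant
  have horbit_eq : ∀ (F : Set V) (w : V ≃ₗᵢ[ℝ] V), w ∈ Subgroup.closure gens →
      {F' | ∃ u ∈ Subgroup.closure gens, F' = ⇑u '' (⇑w '' F)} =
      {F' | ∃ u ∈ Subgroup.closure gens, F' = ⇑u '' F} := by
    intro F w hw
    ext F'
    simp only [Set.mem_setOf_eq]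
    constructor
    · rintro ⟨u, hu, rfl⟩
      exact ⟨u * w, mul_mem hu hw,
        by rw [LinearIsometryEquiv.coe_mul, Set.image_comp]⟩
    · rintro ⟨u, hu, rfl⟩
      refine ⟨u * w⁻¹, mul_mem hu (inv_mem hw), ?_⟩
      rw [LinearIsometryEquiv.coe_mul, Set.image_comp, image_inv_image]
  constructor
  · -- part 1
    intro F hF
    simp only [hypFacets, Set.mem_setOf_eq] at hF
    obtain ⟨x, hx, rfl⟩ := hF
    have hxh : x ∈ {y : V | ⟪α, y⟫ = 0 ∧ ∀ β ∈ R, ⟪α, β⟫ = 0 → ⟪β, y⟫ ≠ 0} := by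
      rw [hHeq]; exact hfacet_sub hx
    refine ⟨connectedComponentIn {y : V | ⟪α, y⟫ = 0 ∧ ∀ β ∈ R, ⟪α, β⟫ = 0 → ⟪β, y⟫ ≠ 0} x,
      ⟨?_, ?_⟩, ?_⟩
    · exact ⟨x, hxh, rfl⟩
    · refine connectedComponentIn_mono x ?_
      intro y hy
      rw [hHeq]
      exact hfacet_sub hy
    · rintro C' ⟨hC', hsub⟩
      simp only [hypChambers, Set.mem_setOf_eq] at hC'
      obtain ⟨x', hx', rfl⟩ := hC'
      have hxF : x ∈ connectedComponentIn (facetSet R α) x := mem_connectedComponentIn hx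
      exact connectedComponentIn_eq (hsub hxF)
  · -- part 2
    intro C hC
    simp only [hypChambers, Set.mem_setOf_eq] at hC
    obtain ⟨x₀, hx₀, rfl⟩ := hC
    replace hx₀ : x₀ ∈ hset α Sα := ⟨hx₀.1, fun β hβ => hx₀.2 β hβ.1 hβ.2⟩
    simp only [hHeq]
    have hinj : Set.InjOn (fun F => {F' | ∃ w ∈ Subgroup.closure gens, F' = ⇑w '' F})
        {F | F ∈ hypFacets R α ∧ F ⊆ connectedComponentIn (hset α Sα) x₀} := by
      rintro F₁ ⟨hF₁, hF₁sub⟩ F₂ ⟨hF₂, hF₂sub⟩ heqo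
      simp only [hypFacets, Set.mem_setOf_eq] at hF₁
      obtain ⟨x₁, hx₁, rfl⟩ := hF₁
      simp only at heqo
      have hF₂mem : F₂ ∈ {F' | ∃ w ∈ Subgroup.closure gens, F' = ⇑w '' F₂} :=
        ⟨1, one_mem _, by simp⟩
      rw [← heqo] at hF₂mem
      obtain ⟨w, hwW, hF₂img⟩ := hF₂mem
      have hx₁h : x₁ ∈ hset α Sα := hfacet_sub hx₁
      have hx₁F : x₁ ∈ connectedComponentIn (facetSet R α) x₁ := mem_connectedComponentIn hx₁
      have hx₁C : x₁ ∈ connectedComponentIn (hset α Sα) x₀ := hF₁sub hx₁F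
      have hwx₁F₂ : w x₁ ∈ F₂ := hF₂img ▸ ⟨x₁, hx₁F, rfl⟩
      have hwx₁C : w x₁ ∈ connectedComponentIn (hset α Sα) x₀ := hF₂sub hwx₁F₂
      have hCeq : connectedComponentIn (hset α Sα) x₀ = connectedComponentIn (hset α Sα) x₁ :=
        connectedComponentIn_eq hx₁C
      have hsign := samesign_of_mem_component α hSαfin hx₁h (hCeq ▸ hwx₁C)
      have hw1 : w = 1 := by
        refine crux Sα x₁ hSαfin hSαnz hSαrefl hSαred (fun β hβ => hx₁h.2 β hβ) w hwW ?_
        intro β hβ hβpos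
        have h1 : 0 < ⟪w β, w x₁⟫ := by rw [inner_w]; exact hβpos
        exact (hsign (w β) (hWSα w hwW β hβ)).mpr h1
      rw [hF₂img, hw1]
      simp
    have hkey : {O : Set (Set V) | ∃ F ∈ hypFacets R α,
          O = {F' | ∃ w ∈ Subgroup.closure gens, F' = ⇑w '' F}}
        = (fun F => {F' | ∃ w ∈ Subgroup.closure gens, F' = ⇑w '' F}) ''
          {F | F ∈ hypFacets R α ∧ F ⊆ connectedComponentIn (hset α Sα) x₀} := by
      ext O
      simp only [Set.mem_setOf_eq, Set.mem_image]
      constructor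
      · rintro ⟨F, hF, rfl⟩
        simp only [hypFacets, Set.mem_setOf_eq] at hF
        obtain ⟨x₁, hx₁, rfl⟩ := hF
        have hx₁h : x₁ ∈ hset α Sα := hfacet_sub hx₁
        obtain ⟨w, hwW, hsign⟩ := htrans x₁ hx₁h x₀ hx₀
        have hwx₁ : w x₁ ∈ facetSet R α := hWfacet w hwW x₁ hx₁
        have himg : ⇑w '' connectedComponentIn (facetSet R α) x₁
            = connectedComponentIn (facetSet R α) (w x₁) :=
          image_connectedComponentIn' w (hWfacet w hwW) (hWfacet w⁻¹ (inv_mem hwW)) hx₁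
        have hwx₁h : w x₁ ∈ hset α Sα := hWhyp w hwW x₁ hx₁h
        have hwx₁C : w x₁ ∈ connectedComponentIn (hset α Sα) x₀ :=
          mem_component_of_samesign α Sα hx₀ hwx₁h (fun β hβ => (hsign β hβ).symm)
        refine ⟨connectedComponentIn (facetSet R α) (w x₁), ⟨?_, ?_⟩, ?_⟩
        · exact ⟨w x₁, hwx₁, rfl⟩
        · have h1 : connectedComponentIn (facetSet R α) (w x₁)
              ⊆ connectedComponentIn (hset α Sα) (w x₁) :=
            connectedComponentIn_mono (w x₁) hfacet_sub
          rw [← connectedComponentIn_eq hwx₁C] at h1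
          exact h1
        · rw [← himg]
          exact horbit_eq _ w hwW
      · rintro ⟨F, ⟨hF, hFsub⟩, rfl⟩
        exact ⟨F, hF, rfl⟩
    rw [hkey, Set.ncard_image_of_injOn hinj]
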